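/- Under the multidimensional moment-quadrature setup, the quadrature is exact for every polynomial of total degree at most 2N−1; equivalently, for every multi-index n ∈ ℕ^d with |n| ≤ 2N−1, the quadrature sum ∑_{q ∈ {1,…,S}^d} w_q · (λ_q)^n equals the moment ∫ x^n dμ(x). -/

import Mathlib

open MeasureTheory Matrix Finset

lemma vecMulVec_mulVec' {S : ℕ} (v w b : Fin S → ℝ) :
    vecMulVec v w *ᵥ b = (w ⬝ᵥ b) • v := by
  ext r
  simp only [vecMulVec_apply, mulVec, dotProduct, Pi.smul_apply, smul_eq_mul, Finset.sum_mul,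
    Finset.mul_sum]
  exact Finset.sum_congr rfl fun i _ => by ring

lemma sum_mulVec' {S : ℕ} (A : Fin S → Matrix (Fin S) (Fin S) ℝ) (b : Fin S → ℝ) :
    (∑ m, A m) *ᵥ b = ∑ m, (A m) *ᵥ b := by
  ext r
  simp only [mulVec, dotProduct, Matrix.sum_apply, Finset.sum_apply, Finset.sum_mul]
  exact Finset.sum_comm

lemma dot_sum' {S : ℕ} (a : Fin S → ℝ) (f : Fin S → Fin S → ℝ) :
    a ⬝ᵥ (∑ m, f m) = ∑ m, a ⬝ᵥ f m := by
  simp only [dotProduct, Finset.sum_apply, Finset.mul_sum]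
  exact Finset.sum_comm

lemma rankone_dot {S : ℕ} (c : Fin S → ℝ) (v w : Fin S → (Fin S → ℝ)) (a b : Fin S → ℝ) :
    a ⬝ᵥ ((∑ m, c m • vecMulVec (v m) (w m)) *ᵥ b)
      = ∑ m, (a ⬝ᵥ v m) * c m * (w m ⬝ᵥ b) := by
  rw [sum_mulVec', dot_sum']
  refine Finset.sum_congr rfl fun m _ => ?_
  rw [smul_mulVec, vecMulVec_mulVec', dotProduct_smul, dotProduct_smul]
  simp only [smul_eq_mul]; ring

lemma sumchain {S : ℕ} : ∀ (k : ℕ) (v : Fin (k+1) → Fin S → (Fin S → ℝ))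
    (c : Fin (k+1) → Fin S → ℝ) (M : Fin (k+1) → Matrix (Fin S) (Fin S) ℝ)
    (_ : ∀ i, M i = ∑ m, c i m • vecMulVec (v i m) (v i m))
    (a b : Fin S → ℝ),
    ∑ q : Fin (k+1) → Fin S,
      (a ⬝ᵥ v 0 (q 0)) *
        (∏ i : Fin k, (v i.castSucc (q i.castSucc) ⬝ᵥ v i.succ (q i.succ))) *
        (v (Fin.last k) (q (Fin.last k)) ⬝ᵥ b) * (∏ i, c i (q i))
      = a ⬝ᵥ ((List.ofFn M).prod *ᵥ b) := by
  intro k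
  induction k with
  | zero =>
    intro v c M hM a b
    rw [← Equiv.sum_comp (Fin.consEquiv (fun _ : Fin (0+1) => Fin S))]
    rw [Fintype.sum_prod_type]
    rw [List.ofFn_succ, List.ofFn_zero, List.prod_cons, List.prod_nil, mul_one, hM 0,
      rankone_dot]
    refine Finset.sum_congr rfl fun m _ => ?_
    simp [Fin.prod_univ_succ, Fin.last]
    ring
  | succ k IH =>
    intro v c M hM a b
    have key : ∀ y : Fin S → ℝ, ∑ x, (a ⬝ᵥ v 0 x) * c 0 x * (v 0 x ⬝ᵥ y)
        = (a ᵥ* M 0) ⬝ᵥ y := by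
      intro y
      rw [← dotProduct_mulVec, hM 0, rankone_dot]
    rw [← Equiv.sum_comp (Fin.consEquiv (fun _ : Fin (k+1+1) => Fin S))]
    rw [Fintype.sum_prod_type, Finset.sum_comm]
    have step1 : ∀ q' : Fin (k+1) → Fin S,
        (∑ x : Fin S,
          (a ⬝ᵥ v 0 ((Fin.consEquiv (fun _ : Fin (k+1+1) => Fin S)) (x, q') 0)) *
            (∏ i : Fin (k+1), (v i.castSucc ((Fin.consEquiv (fun _ : Fin (k+1+1) => Fin S)) (x, q') i.castSucc) ⬝ᵥ
                v i.succ ((Fin.consEquiv (fun _ : Fin (k+1+1) => Fin S)) (x, q') i.succ))) *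
            (v (Fin.last (k+1)) ((Fin.consEquiv (fun _ : Fin (k+1+1) => Fin S)) (x, q') (Fin.last (k+1))) ⬝ᵥ b) *
            (∏ i, c i ((Fin.consEquiv (fun _ : Fin (k+1+1) => Fin S)) (x, q') i)))
        = ((a ᵥ* M 0) ⬝ᵥ (fun j => v (Fin.succ j)) 0 (q' 0)) *
            (∏ i : Fin k, ((fun j => v (Fin.succ j)) i.castSucc (q' i.castSucc) ⬝ᵥ
                (fun j => v (Fin.succ j)) i.succ (q' i.succ))) *
            ((fun j => v (Fin.succ j)) (Fin.last k) (q' (Fin.last k)) ⬝ᵥ b) *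
            (∏ i, (fun j => c (Fin.succ j)) i (q' i)) := by
      intro q'
      rw [← key, Finset.sum_mul, Finset.sum_mul, Finset.sum_mul]
      refine Finset.sum_congr rfl fun x _ => ?_
      simp only [Fin.consEquiv_apply]
      rw [Fin.prod_univ_succ, Fin.prod_univ_succ]
      simp only [Fin.castSucc_zero, Fin.cons_zero, ← Fin.succ_castSucc, ← Fin.succ_last,
        Fin.cons_succ]
      ring
    rw [Finset.sum_congr rfl fun q' _ => step1 q']
    rw [IH (fun j => v (Fin.succ j)) (fun j => c (Fin.succ j)) (fun j => M (Fin.succ j))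
      (fun j => hM j.succ) (a ᵥ* M 0) b]
    rw [show (List.ofFn M).prod = M 0 * (List.ofFn fun j => M j.succ).prod from by
        rw [List.ofFn_succ, List.prod_cons], ← mulVec_mulVec, dotProduct_mulVec,
      dotProduct_mulVec, dotProduct_mulVec]

lemma mul_vecMulVec' {S : ℕ} (B : Matrix (Fin S) (Fin S) ℝ) (a c : Fin S → ℝ) :
    B * vecMulVec a c = vecMulVec (B *ᵥ a) c := by
  ext r s
  simp only [Matrix.mul_apply, vecMulVec_apply, mulVec, dotProduct, Finset.sum_mul]
  exact Finset.sum_congr rfl fun i _ => by ring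

lemma smul_vecMulVec' {S : ℕ} (t : ℝ) (a c : Fin S → ℝ) :
    vecMulVec (t • a) c = t • vecMulVec a c := by
  ext r s
  simp [vecMulVec_apply, mul_assoc]

lemma spectral {S : ℕ} (A : Matrix (Fin S) (Fin S) ℝ) (lam : Fin S → ℝ) (u : Fin S → Fin S → ℝ)
    (horth : ∀ n m, u n ⬝ᵥ u m = if n = m then (1:ℝ) else 0)
    (heig : ∀ n, A *ᵥ u n = lam n • u n) (k : ℕ) :
    A ^ k = ∑ m, (lam m ^ k) • vecMulVec (u m) (u m) := by
  have hU : (Matrix.of fun m r => u m r) * (Matrix.of fun m r => u m r)ᵀ = 1 := by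
    ext p q
    simp only [Matrix.mul_apply, transpose_apply, Matrix.of_apply, Matrix.one_apply]
    exact horth p q
  have hUc : (Matrix.of fun m r => u m r)ᵀ * (Matrix.of fun m r => u m r) = 1 :=
    mul_eq_one_comm.mp hU
  have hcomp : ∑ m, vecMulVec (u m) (u m) = 1 := by
    ext r s
    rw [← hUc]
    simp only [Matrix.sum_apply, vecMulVec_apply, Matrix.mul_apply, transpose_apply,
      Matrix.of_apply]
  have heigpow : ∀ n, A ^ k *ᵥ u n = (lam n ^ k) • u n := by
    intro n
    induction k with
    | zero => simp
    | succ k IH =>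
      rw [pow_succ, ← mulVec_mulVec, heig, mulVec_smul, IH, pow_succ, smul_smul, mul_comm]
  calc A ^ k = A ^ k * ∑ m, vecMulVec (u m) (u m) := by rw [hcomp, mul_one]
    _ = ∑ m, A ^ k * vecMulVec (u m) (u m) := Finset.mul_sum _ _ _
    _ = ∑ m, (lam m ^ k) • vecMulVec (u m) (u m) := by
        refine Finset.sum_congr rfl fun m _ => ?_
        rw [mul_vecMulVec', heigpow, smul_vecMulVec']

lemma sum_count_eq_length' {α : Type*} [Fintype α] [DecidableEq α] (l : List α) :
    ∑ j, l.count j = l.length := by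
  induction l with
  | nil => simp
  | cons a t IH =>
    simp only [List.count_cons, List.length_cons, Finset.sum_add_distrib, IH, beq_iff_eq]
    congr 1
    simp

lemma chain_lemma {S d K : ℕ} (Hhat : Fin (d+1) → Matrix (Fin S) (Fin S) ℝ)
    (χ : (Fin (d+1) → ℕ) → (Fin S → ℝ))
    (key : ∀ (i : Fin (d+1)) (m : Fin (d+1) → ℕ), (∑ j, m j) + 1 ≤ K →
      Hhat i *ᵥ χ m = χ (fun j => m j + if j = i then 1 else 0)) :
    ∀ ℓ : List (Fin (d+1)), ℓ.length ≤ K →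
      ((ℓ.map Hhat).prod) *ᵥ χ (fun _ => 0) = χ (fun j => ℓ.count j) := by
  intro ℓ
  induction ℓ with
  | nil => intro _; simp
  | cons i t IH =>
    intro hlen
    rw [List.map_cons, List.prod_cons, ← mulVec_mulVec,
      IH (by simpa using Nat.le_of_succ_le hlen),
      key i _ (by rw [sum_count_eq_length']; simpa using hlen)]
    have harg : (fun j => List.count j t + if j = i then 1 else 0)
        = (fun j : Fin (d+1) => List.count j (i :: t)) := by
      funext j
      by_cases h : j = i
      · simp [List.count_cons, h, beq_iff_eq]
      · simp [List.count_cons, h, beq_iff_eq, Ne.symm h]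
    rw [harg]

lemma mono_mul {d : ℕ} (i : Fin (d+1)) (a : Fin (d+1) → ℕ) (x : Fin (d+1) → ℝ) :
    x i * ∏ j, x j ^ a j = ∏ j, x j ^ (a j + if j = i then 1 else 0) := by
  have h : ∀ j : Fin (d+1), x j ^ (if j = i then 1 else 0) = if j = i then x j else 1 := by
    intro j; split <;> simp
  simp only [pow_add, Finset.prod_mul_distrib, h, Finset.prod_ite_eq' Finset.univ i x,
    Finset.mem_univ, if_true]
  ring

/-- Under the multidimensional moment-quadrature setup (dimension `d + 1 ≥ 1`,
order `N ≥ 1`, `S = C(N-1+(d+1), d+1)` basis monomials of total degree `≤ N-1`, Gram matrix `G`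
positive definite with lower-triangular Cholesky factor `L`, Hankel matrices `H i`,
orthonormalised `Hhat i = L⁻¹ * H i * (Lᵀ)⁻¹` with orthonormal eigenvectors `u i n` and
eigenvalues `lam i n`), the quadrature with nodes `λ_q = (lam i (q i))_i` and weights
`w q = ⟨e₀, u⁽¹⁾_{q₁}⟩ (∏ ⟨u⁽ⁱ⁾_{qᵢ}, u⁽ⁱ⁺¹⁾_{q_{i+1}}⟩) ⟨u⁽ᵈ⁾_{q_d}, e₀⟩` is exact for every
monomial (hence polynomial) of total degree at most `2N - 1`. -/
theorem moment_quadrature_polynomial_exactness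
    (d N S : ℕ) (hN : 1 ≤ N)
    (hS : S = Nat.choose (N - 1 + (d + 1)) (d + 1))
    (μ : Measure (Fin (d + 1) → ℝ)) [IsProbabilityMeasure μ]
    (hmom : ∀ n : Fin (d + 1) → ℕ, (∑ i, n i) ≤ 2 * N - 1 →
      Integrable (fun x => ∏ i, x i ^ n i) μ)
    (ι : Fin S → (Fin (d + 1) → ℕ))
    (hι_inj : Function.Injective ι)
    (hι_deg : ∀ u, (∑ i, ι u i) ≤ N - 1)
    (hι_surj : ∀ n : Fin (d + 1) → ℕ, (∑ i, n i) ≤ N - 1 → ∃ u, ι u = n)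
    (hι0 : ∀ u : Fin S, (u : ℕ) = 0 → ι u = 0)
    (G : Matrix (Fin S) (Fin S) ℝ)
    (hG : ∀ u v, G u v = ∫ x, ∏ i, x i ^ (ι u i + ι v i) ∂μ)
    (hGpd : G.PosDef)
    (L : Matrix (Fin S) (Fin S) ℝ)
    (hL_lower : ∀ u v : Fin S, u < v → L u v = 0)
    (hLLT : L * L.transpose = G)
    (H : Fin (d + 1) → Matrix (Fin S) (Fin S) ℝ)
    (hH : ∀ i u v, H i u v = ∫ x, x i * ∏ j, x j ^ (ι u j + ι v j) ∂μ)
    (Hhat : Fin (d + 1) → Matrix (Fin S) (Fin S) ℝ)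
    (hHhat : ∀ i, Hhat i = L⁻¹ * H i * (L.transpose)⁻¹)
    (lam : Fin (d + 1) → Fin S → ℝ)
    (u : Fin (d + 1) → Fin S → (Fin S → ℝ))
    (hu_orth : ∀ i n m, u i n ⬝ᵥ u i m = if n = m then (1 : ℝ) else 0)
    (heig : ∀ i n, (Hhat i) *ᵥ u i n = lam i n • u i n)
    (e₀ : Fin S → ℝ)
    (he₀ : ∀ j : Fin S, e₀ j = if (j : ℕ) = 0 then (1 : ℝ) else 0)
    (w : (Fin (d + 1) → Fin S) → ℝ)
    (hw : ∀ q : Fin (d + 1) → Fin S, w q =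
      (e₀ ⬝ᵥ u 0 (q 0)) *
      (∏ i : Fin d, (u i.castSucc (q i.castSucc) ⬝ᵥ u i.succ (q i.succ))) *
      (u (Fin.last d) (q (Fin.last d)) ⬝ᵥ e₀)) :
    ∀ n : Fin (d + 1) → ℕ, (∑ i, n i) ≤ 2 * N - 1 →
      ∑ q : Fin (d + 1) → Fin S, w q * ∏ i, (lam i (q i)) ^ n i
        = ∫ x, ∏ i, x i ^ n i ∂μ := by
  classical
  intro n hn
  have hS0 : 0 < S := by
    rw [hS]; exact Nat.choose_pos (by omega)
  obtain ⟨z, hzval⟩ : ∃ z : Fin S, (z : ℕ) = 0 := ⟨⟨0, hS0⟩, rfl⟩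
  -- invertibility of L
  have hdet : IsUnit L.det := by
    have h1 : G.det = L.det * L.det := by rw [← hLLT, Matrix.det_mul, Matrix.det_transpose]
    have h2 : G.det ≠ 0 := ne_of_gt hGpd.det_pos
    refine isUnit_iff_ne_zero.mpr fun h => h2 ?_
    rw [h1, h, mul_zero]
  have hdetT : IsUnit Lᵀ.det := by rwa [Matrix.det_transpose]
  have hLL : L⁻¹ * L = 1 := Matrix.nonsing_inv_mul L hdet
  have hLL' : L * L⁻¹ = 1 := Matrix.mul_nonsing_inv L hdet
  have hLTL : Lᵀ⁻¹ * Lᵀ = 1 := Matrix.nonsing_inv_mul _ hdetT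
  -- index of a monomial
  have hex : ∀ m : Fin (d+1) → ℕ, ∃ t : Fin S, (∑ i, m i) ≤ N - 1 → ι t = m := by
    intro m
    by_cases h : (∑ i, m i) ≤ N - 1
    · obtain ⟨t, ht⟩ := hι_surj m h; exact ⟨t, fun _ => ht⟩
    · exact ⟨z, fun h' => absurd h' h⟩
  choose idx hidx using hex
  obtain ⟨χ, hχ⟩ : ∃ χ : (Fin (d+1) → ℕ) → (Fin S → ℝ),
      ∀ m, χ m = Lᵀ *ᵥ Pi.single (idx m) 1 := ⟨_, fun _ => rfl⟩
  have hχrow : ∀ m, χ m = Pi.single (idx m) 1 ᵥ* L := by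
    intro m
    rw [hχ, ← Matrix.transpose_transpose L, Matrix.vecMul_transpose, Matrix.transpose_transpose]
  -- Hhat applied to χ
  have hHhatχ : ∀ (i : Fin (d+1)) m, Hhat i *ᵥ χ m = L⁻¹ *ᵥ (H i *ᵥ Pi.single (idx m) 1) := by
    intro i m
    rw [hχ, hHhat, mulVec_mulVec, Matrix.mul_assoc (L⁻¹ * H i) Lᵀ⁻¹ Lᵀ, hLTL, mul_one,
      ← mulVec_mulVec]
  -- key multiplication property
  have hkey : ∀ (i : Fin (d+1)) (m : Fin (d+1) → ℕ), (∑ j, m j) + 1 ≤ N - 1 →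
      Hhat i *ᵥ χ m = χ (fun j => m j + if j = i then 1 else 0) := by
    intro i m hm
    have hsum' : (∑ j, (fun j => m j + if j = i then 1 else 0) j) = (∑ j, m j) + 1 := by
      rw [Finset.sum_add_distrib]
      congr 1
      simp
    have hmle : (∑ j, m j) ≤ N - 1 := by omega
    have hm'le : (∑ j, (fun j => m j + if j = i then 1 else 0) j) ≤ N - 1 := by omega
    have hcol : H i *ᵥ Pi.single (idx m) 1
        = G *ᵥ Pi.single (idx (fun j => m j + if j = i then 1 else 0)) 1 := by
      rw [Matrix.mulVec_single_one, Matrix.mulVec_single_one]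
      funext r
      rw [Matrix.col_apply, Matrix.col_apply, hH, hG, hidx m hmle, hidx _ hm'le]
      have hpt : ∀ x : Fin (d+1) → ℝ, x i * ∏ j, x j ^ (ι r j + m j)
          = ∏ j, x j ^ (ι r j + (m j + if j = i then 1 else 0)) := by
        intro x
        rw [mono_mul i (fun j => ι r j + m j) x]
        exact Finset.prod_congr rfl fun j _ => by rw [add_assoc]
      simp only [hpt]
    rw [hHhatχ, hcol, mulVec_mulVec, ← hLLT, ← Matrix.mul_assoc, hLL, one_mul, ← hχ]
  -- dot products
  have hχvmLinv : ∀ m, χ m ᵥ* L⁻¹ = Pi.single (idx m) 1 := by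
    intro m
    rw [hχrow, Matrix.vecMul_vecMul, hLL', Matrix.vecMul_one]
  have hdotG : ∀ a b, χ a ⬝ᵥ χ b = G (idx a) (idx b) := by
    intro a b
    rw [hχrow a, hχ b, dotProduct_mulVec, Matrix.vecMul_vecMul, hLLT]
    rw [Matrix.single_vecMul]
    simp [dotProduct, Pi.single_apply]
  have hdotH : ∀ a b (i : Fin (d+1)), χ a ⬝ᵥ (Hhat i *ᵥ χ b) = H i (idx a) (idx b) := by
    intro a b i
    rw [hHhatχ, dotProduct_mulVec, hχvmLinv, single_dotProduct, one_mul]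
    simp [Matrix.mulVec_single]
  -- the list of factors
  obtain ⟨ℓ, hℓ⟩ : ∃ l : List (Fin (d+1)),
      l = (List.ofFn fun i => List.replicate (n i) i).flatten := ⟨_, rfl⟩
  have hlen : ℓ.length = ∑ i, n i := by
    rw [hℓ, List.length_flatten, List.map_ofFn, List.sum_ofFn]
    exact Finset.sum_congr rfl fun i _ => by simp
  have hcnt : ∀ j, ℓ.count j = n j := by
    intro j
    rw [hℓ, List.count_flatten, List.map_ofFn, List.sum_ofFn]
    have hterm : ∀ i : Fin (d+1), (List.count j ∘ fun i => List.replicate (n i) i) i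
        = if i = j then n i else 0 := by
      intro i
      simp [List.count_replicate]
    rw [Finset.sum_congr rfl fun i _ => hterm i, Finset.sum_ite_eq' Finset.univ j n]
    simp
  have hmapflat : (ℓ.map Hhat).prod = (List.ofFn fun i => Hhat i ^ n i).prod := by
    rw [hℓ, List.map_flatten, List.map_ofFn, List.prod_flatten, List.map_ofFn]
    refine congrArg List.prod (congrArg List.ofFn (funext fun i => ?_))
    simp [Function.comp, List.map_replicate, List.prod_replicate]
  -- quadrature side
  have hquad : ∑ q : Fin (d+1) → Fin S, w q * ∏ i, lam i (q i) ^ n i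
      = e₀ ⬝ᵥ ((ℓ.map Hhat).prod *ᵥ e₀) := by
    rw [hmapflat]
    rw [← sumchain d u (fun i m => lam i m ^ n i) (fun i => Hhat i ^ n i)
      (fun i => spectral (Hhat i) (lam i) (u i) (hu_orth i) (heig i) (n i)) e₀ e₀]
    refine Finset.sum_congr rfl fun q _ => ?_
    rw [hw]
  -- e₀ and χ 0
  have hz_lt : ∀ r : Fin S, r ≠ z → z < r := by
    intro r hr
    have : (r : ℕ) ≠ 0 := fun h => hr (Fin.ext (h.trans hzval.symm))
    exact Fin.lt_def.mpr (by omega)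
  have hiz : ι z = fun _ => 0 := by
    have := hι0 z hzval
    funext j
    rw [this]; rfl
  have hidx0 : idx (fun _ => 0) = z := by
    refine hι_inj ?_
    rw [hidx _ (by simp), hiz]
  have he₀single : e₀ = Pi.single z 1 := by
    funext j
    rw [he₀, Pi.single_apply]
    by_cases h : j = z
    · simp [h, hzval]
    · have : (j : ℕ) ≠ 0 := fun hj => h (Fin.ext (hj.trans hzval.symm))
      simp [h, this]
  have hχ0 : χ (fun _ => 0) = L z z • e₀ := by
    rw [hχ, hidx0, Matrix.mulVec_single_one]
    funext r
    simp only [Matrix.col_apply, transpose_apply, mul_one, Pi.smul_apply, smul_eq_mul, he₀]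
    by_cases h : r = z
    · simp [h, hzval]
    · have h2 : (r : ℕ) ≠ 0 := fun hj => h (Fin.ext (hj.trans hzval.symm))
      rw [hL_lower z r (hz_lt r h)]
      simp [h2]
  have hGzz : G z z = 1 := by
    rw [hG, hiz]
    simp
  have hLzz : L z z * L z z = 1 := by
    have hm : G z z = L z z * L z z := by
      rw [← hLLT, Matrix.mul_apply]
      rw [Finset.sum_eq_single z]
      · rw [transpose_apply]
      · intro r _ hr
        rw [hL_lower z r (hz_lt r hr), zero_mul]
      · simp
    rw [← hGzz, hm]
  have hdot_e0χ : ∀ P : Matrix (Fin S) (Fin S) ℝ,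
      χ (fun _ => 0) ⬝ᵥ (P *ᵥ χ (fun _ => 0)) = e₀ ⬝ᵥ (P *ᵥ e₀) := by
    intro P
    rw [hχ0, smul_dotProduct, Matrix.mulVec_smul, dotProduct_smul]
    rw [smul_smul, hLzz, one_smul]
  rcases Nat.eq_zero_or_pos (∑ i, n i) with h0 | hpos
  · -- degree zero
    have hni : ∀ i, n i = 0 := by
      intro i
      exact (Finset.sum_eq_zero_iff.mp h0) i (Finset.mem_univ i)
    have hprod1 : (ℓ.map Hhat).prod = 1 := by
      rw [hmapflat]
      refine List.prod_eq_one fun x hx => ?_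
      obtain ⟨i, hi⟩ := List.mem_ofFn.mp hx
      rw [← hi]
      show Hhat i ^ n i = 1
      rw [hni i, pow_zero]
    rw [hquad, hprod1, Matrix.one_mulVec, he₀single, single_dotProduct, one_mul,
      Pi.single_eq_same]
    simp [hni]
  · -- positive degree
    have hHsym : ∀ i, (H i)ᵀ = H i := by
      intro i; ext a b
      rw [transpose_apply, hH, hH]
      have hpt : (fun x : Fin (d+1) → ℝ => x i * ∏ j, x j ^ (ι b j + ι a j))
          = fun x => x i * ∏ j, x j ^ (ι a j + ι b j) := by
        funext x
        congr 1
        exact Finset.prod_congr rfl fun j _ => by rw [add_comm]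
      rw [hpt]
    have hHhatsym : ∀ i, (Hhat i)ᵀ = Hhat i := by
      intro i
      have h1 : (Lᵀ⁻¹)ᵀ = L⁻¹ := by
        rw [← Matrix.transpose_nonsing_inv, Matrix.transpose_transpose]
      have h2 : (L⁻¹)ᵀ = Lᵀ⁻¹ := Matrix.transpose_nonsing_inv L
      rw [hHhat i, Matrix.transpose_mul, Matrix.transpose_mul, h1, h2, hHsym i,
        Matrix.mul_assoc]
    have CH := chain_lemma Hhat χ hkey
    obtain ⟨k, hkdef⟩ : ∃ k, k = min ((∑ i, n i) - 1) (N - 1) := ⟨_, rfl⟩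
    have hklt : k < ℓ.length := by rw [hkdef, hlen]; omega
    have hsplit : ℓ = ℓ.take k ++ (ℓ[k]'hklt) :: ℓ.drop (k+1) := by
      conv_lhs => rw [← List.take_append_drop k ℓ]
      rw [List.drop_eq_getElem_cons hklt]
    have htake_len : (ℓ.take k).length ≤ N - 1 := by rw [List.length_take]; omega
    have hdrop_len : (ℓ.drop (k+1)).length ≤ N - 1 := by
      rw [List.length_drop, hlen]; omega
    have hB : ((ℓ.drop (k+1)).map Hhat).prod *ᵥ χ (fun _ => 0)
        = χ (fun j => (ℓ.drop (k+1)).count j) := CH _ hdrop_len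
    have hArev : ((ℓ.take k).reverse.map Hhat).prod *ᵥ χ (fun _ => 0)
        = χ (fun j => (ℓ.take k).reverse.count j) :=
      CH _ (by rw [List.length_reverse]; exact htake_len)
    have hAT : (((ℓ.take k).map Hhat).prod)ᵀ = ((ℓ.take k).reverse.map Hhat).prod := by
      rw [Matrix.transpose_list_prod]
      rw [show List.map transpose (List.map Hhat (ℓ.take k)) = List.map Hhat (ℓ.take k) from by
        rw [List.map_map]
        exact List.map_congr_left fun x _ => hHhatsym x]
      rw [← List.map_reverse]
    have hvm : χ (fun _ => 0) ᵥ* ((ℓ.take k).map Hhat).prod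
        = χ (fun j => (ℓ.take k).count j) := by
      rw [← Matrix.transpose_transpose (((ℓ.take k).map Hhat).prod), Matrix.vecMul_transpose,
        hAT, hArev]
      refine congrArg χ (funext fun j => ?_)
      rw [List.count_reverse]
    have hsuma : (∑ j, (ℓ.take k).count j) ≤ N - 1 := by
      rw [sum_count_eq_length']; exact htake_len
    have hsumb : (∑ j, (ℓ.drop (k+1)).count j) ≤ N - 1 := by
      rw [sum_count_eq_length']; exact hdrop_len
    rw [hquad, ← hdot_e0χ]
    conv_lhs => rw [hsplit]
    rw [List.map_append, List.prod_append, List.map_cons, List.prod_cons, ← mulVec_mulVec,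
      dotProduct_mulVec, hvm, ← mulVec_mulVec, hB, hdotH]
    rw [hH, hidx _ hsuma, hidx _ hsumb]
    have hpt : ∀ x : Fin (d+1) → ℝ,
        x (ℓ[k]'hklt) * ∏ j, x j ^ ((ℓ.take k).count j + (ℓ.drop (k+1)).count j)
          = ∏ j, x j ^ n j := by
      intro x
      rw [mono_mul (ℓ[k]'hklt) (fun j => (ℓ.take k).count j + (ℓ.drop (k+1)).count j) x]
      refine Finset.prod_congr rfl fun j _ => ?_
      congr 1
      rw [← hcnt j]
      conv_rhs => rw [hsplit]
      rw [List.count_append, List.count_cons]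
      by_cases h : j = ℓ[k]'hklt
      · simp [h]
        omega
      · simp [h, Ne.symm h]
    simp only [hpt]
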